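/- Let G be a bipartite graph without isolated vertices, with bipartition V_1 = {x_1,…,x_g} and V_2 = {y_1,…,y_g}, such that {x_i, y_i} is an edge of G for all i (so the edges e_i = {x_i, y_i} form a perfect matching). Let Γ = Δ_G^{[g]} be the simplicial complex whose facets are the independent sets of G of cardinality g. Then Γ is pure shellable if and only if the indices can be reordered so that {x_i, y_j} ∈ E(G) implies i ≤ j; that is, if and only if there is a permutation π of {1,…,g} such that every edge {x_i, y_j} of G satisfies π(i) ≤ π(j). -/

import Mathlib

variable {V : Type} [Fintype V] [DecidableEq V]

/-- A clutter: a family of finsets (edges), none of which contains another. -/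
def IsClutter (E : Set (Finset V)) : Prop :=
  ∀ e ∈ E, ∀ f ∈ E, e ⊆ f → e = f

/-- A vertex cover: a set of vertices meeting every edge. -/
def IsVertexCover (E : Set (Finset V)) (C : Finset V) : Prop :=
  ∀ e ∈ E, (e ∩ C).Nonempty

/-- A minimal vertex cover. -/
def IsMinimalVertexCover (E : Set (Finset V)) (C : Finset V) : Prop :=
  IsVertexCover E C ∧ ∀ D ⊂ C, ¬ IsVertexCover E D

/-- The covering number: minimum cardinality of a vertex cover. -/
noncomputable def coveringNumber (E : Set (Finset V)) : ℕ :=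
  sInf {n : ℕ | ∃ C : Finset V, IsVertexCover E C ∧ C.card = n}

/-- Unmixed: all minimal vertex covers have the same cardinality. -/
def Unmixed (E : Set (Finset V)) : Prop :=
  ∀ C D : Finset V, IsMinimalVertexCover E C → IsMinimalVertexCover E D →
    C.card = D.card

/-- A matching: a set of pairwise disjoint edges. -/
def IsMatching (E : Set (Finset V)) (M : Finset (Finset V)) : Prop :=
  ↑M ⊆ E ∧ (M : Set (Finset V)).Pairwise Disjoint

/-- The König property: the maximum size of a matching equals the covering number. -/
def HasKonigProperty (E : Set (Finset V)) : Prop :=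
  (∃ M : Finset (Finset V), IsMatching E M ∧ M.card = coveringNumber E) ∧
  ∀ M : Finset (Finset V), IsMatching E M → M.card ≤ coveringNumber E

/-- A perfect matching of König type: pairwise disjoint edges `em 0, …, em (g-1)`
whose union is the whole vertex set, where `g` is the covering number. -/
def IsPerfectMatchingKT (E : Set (Finset V)) {g : ℕ} (em : Fin g → Finset V) : Prop :=
  (∀ i, em i ∈ E) ∧ (∀ i j, i ≠ j → Disjoint (em i) (em j)) ∧
  (∀ x : V, ∃ i, x ∈ em i) ∧ g = coveringNumber E

/-- An independent set: contains no edge. -/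
def IsIndependentSet (E : Set (Finset V)) (F : Finset V) : Prop :=
  ∀ e ∈ E, ¬ e ⊆ F

/-- A facet of the independence complex: a maximal independent set. -/
def IsFacet (E : Set (Finset V)) (F : Finset V) : Prop :=
  IsIndependentSet E F ∧ ∀ G : Finset V, IsIndependentSet E G → F ⊆ G → F = G

/-- The set of facets of the independence complex of a clutter. -/
def cFacets (E : Set (Finset V)) : Set (Finset V) := {F | IsFacet E F}

/-- `F : Fin s → Finset V` is a shelling order of the family of facets `Fac`. -/
def IsShelling {s : ℕ} (Fac : Set (Finset V)) (F : Fin s → Finset V) : Prop :=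
  Function.Injective F ∧ (∀ G : Finset V, G ∈ Fac ↔ ∃ i, F i = G) ∧
  ∀ i j : Fin s, i < j →
    ∃ v ∈ F j \ F i, ∃ l : Fin s, l < j ∧ F j \ F l = {v}

/-- A family of facets is shellable if it admits a shelling order. -/
def Shellable (Fac : Set (Finset V)) : Prop :=
  ∃ (s : ℕ) (F : Fin s → Finset V), IsShelling Fac F

/-- A family of facets is pure if all its members have the same cardinality. -/
def PureFamily (Fac : Set (Finset V)) : Prop :=
  ∀ F ∈ Fac, ∀ G ∈ Fac, F.card = G.card

/-- Pure shellable: pure and shellable. -/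
def PureShellable (Fac : Set (Finset V)) : Prop :=
  PureFamily Fac ∧ Shellable Fac

/-- A free vertex: a vertex belonging to exactly one edge. -/
def HasFreeVertex (E : Set (Finset V)) : Prop :=
  ∃ x : V, ∃ e ∈ E, x ∈ e ∧ ∀ f ∈ E, x ∈ f → f = e

/-- A cycle of length `r`: `r` distinct vertices and `r` distinct edges such that each
of the vertices lies in exactly two of the edges and each of the edges contains exactly
two of the vertices. -/
def HasCycleOfLength (E : Set (Finset V)) (r : ℕ) : Prop :=
  ∃ (v : Fin r → V) (f : Fin r → Finset V),
    Function.Injective v ∧ Function.Injective f ∧ (∀ j, f j ∈ E) ∧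
    (∀ i : Fin r, (Finset.univ.filter (fun j => v i ∈ f j)).card = 2) ∧
    (∀ j : Fin r, (Finset.univ.filter (fun i => v i ∈ f j)).card = 2)

/-- An independent set of a simple graph: a finset of vertices containing no edge. -/
def GraphIndep {W : Type} (G : SimpleGraph W) (F : Finset W) : Prop :=
  ∀ a ∈ F, ∀ b ∈ F, ¬ G.Adj a b

namespace PSS18
open Finset

variable {g : ℕ} (G : SimpleGraph (Fin g ⊕ Fin g))

def Closed (S : Finset (Fin g)) : Prop :=
  ∀ a ∈ S, ∀ b, G.Adj (Sum.inl a) (Sum.inr b) → b ∈ S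

def toFacet (S : Finset (Fin g)) : Finset (Fin g ⊕ Fin g) :=
  S.image Sum.inl ∪ Sᶜ.image Sum.inr

variable {G}

@[simp] lemma mem_inl {S : Finset (Fin g)} {a : Fin g} :
    Sum.inl a ∈ toFacet S ↔ a ∈ S := by simp [toFacet]

@[simp] lemma mem_inr {S : Finset (Fin g)} {a : Fin g} :
    Sum.inr a ∈ toFacet S ↔ a ∉ S := by simp [toFacet]

lemma card_toFacet (S : Finset (Fin g)) : (toFacet S).card = g := by
  rw [toFacet, card_union_of_disjoint, card_image_of_injective _ Sum.inl_injective,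
    card_image_of_injective _ Sum.inr_injective, card_add_card_compl, Fintype.card_fin]
  simp [Finset.disjoint_left]

lemma toFacet_inj {S T : Finset (Fin g)} (h : toFacet S = toFacet T) : S = T := by
  ext a
  constructor <;> intro ha
  · have : Sum.inl a ∈ toFacet T := by rw [← h]; simpa using ha
    simpa using this
  · have : Sum.inl a ∈ toFacet S := by rw [h]; simpa using ha
    simpa using this

lemma exact_one (hmatch : ∀ i, G.Adj (Sum.inl i) (Sum.inr i))
    {F : Finset (Fin g ⊕ Fin g)} (hind : GraphIndep G F) (hcard : F.card = g)
    (a : Fin g) : Sum.inl a ∈ F ↔ Sum.inr a ∉ F := by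
  constructor
  · intro h1 h2
    exact hind _ h1 _ h2 (hmatch a)
  · intro h2
    -- the index map is injective on F
    set idx : Fin g ⊕ Fin g → Fin g := Sum.elim id id with hidx
    have hinj : Set.InjOn idx F := by
      rintro (u | u) hu (v | v) hv huv
      · simpa [hidx] using huv
      · simp only [hidx, Sum.elim_inl, Sum.elim_inr, id] at huv
        subst huv
        exact absurd (hmatch u) (hind _ hu _ hv)
      · simp only [hidx, Sum.elim_inl, Sum.elim_inr, id] at huv
        subst huv
        exact absurd (hmatch u) (hind _ hv _ hu)
      · simpa [hidx] using huv
    have himg : F.image idx = univ := by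
      apply Finset.eq_univ_of_card
      rw [Finset.card_image_of_injOn hinj, hcard, Fintype.card_fin]
    have : a ∈ F.image idx := by rw [himg]; exact mem_univ a
    obtain ⟨u, hu, hua⟩ := mem_image.mp this
    rcases u with b | b
    · simp only [hidx, Sum.elim_inl, id] at hua; subst hua; exact hu
    · simp only [hidx, Sum.elim_inr, id] at hua; subst hua; exact absurd hu h2


lemma mem_Fac_iff (hbip : (∀ a b, ¬ G.Adj (Sum.inl a) (Sum.inl b)) ∧
      (∀ a b, ¬ G.Adj (Sum.inr a) (Sum.inr b)))
    (hmatch : ∀ i, G.Adj (Sum.inl i) (Sum.inr i))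
    {F : Finset (Fin g ⊕ Fin g)} :
    (GraphIndep G F ∧ F.card = g) ↔ ∃ S, Closed G S ∧ F = toFacet S := by
  constructor
  · rintro ⟨hind, hcard⟩
    refine ⟨univ.filter (fun a => Sum.inl a ∈ F), ?_, ?_⟩
    · intro a ha b hadj
      simp only [mem_filter, mem_univ, true_and] at ha ⊢
      by_contra hb
      have hb' : Sum.inr b ∈ F := by
        by_contra h
        exact hb ((exact_one hmatch hind hcard b).mpr h)
      exact hind _ ha _ hb' hadj
    · ext u
      rcases u with a | a
      · simp [mem_inl]
      · rw [mem_inr]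
        simp only [mem_filter, mem_univ, true_and]
        have := exact_one hmatch hind hcard a
        tauto
  · rintro ⟨S, hS, rfl⟩
    refine ⟨?_, card_toFacet S⟩
    rintro (a | a) ha (b | b) hb hadj
    · exact hbip.1 a b hadj
    · rw [mem_inl] at ha; rw [mem_inr] at hb
      exact hb (hS a ha b hadj)
    · rw [mem_inr] at ha; rw [mem_inl] at hb
      exact ha (hS b hb a (G.symm.symm _ _ hadj))
    · exact hbip.2 a b hadj

noncomputable def key (S : Finset (Fin g)) : ℕ :=
  ((Fintype.equivFin (Finset (Fin g))) S : ℕ) + (g - S.card) * 2 ^ g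

lemma keylow_lt (S : Finset (Fin g)) :
    ((Fintype.equivFin (Finset (Fin g))) S : ℕ) < 2 ^ g := by
  have := ((Fintype.equivFin (Finset (Fin g))) S).isLt
  simpa [Fintype.card_finset, Fintype.card_fin] using this

lemma key_injective : Function.Injective (key (g := g)) := by
  intro S T h
  have hS := keylow_lt S
  have hT := keylow_lt T
  have hmod : ((Fintype.equivFin (Finset (Fin g))) S : ℕ)
      = ((Fintype.equivFin (Finset (Fin g))) T : ℕ) := by
    have := congrArg (· % 2 ^ g) h
    simpa [key, Nat.add_mul_mod_self_right, Nat.mod_eq_of_lt hS, Nat.mod_eq_of_lt hT] using this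
  exact (Fintype.equivFin (Finset (Fin g))).injective (Fin.ext hmod)

lemma key_lt_of_card_lt {S T : Finset (Fin g)} (h : T.card < S.card) :
    key S < key T := by
  have hS : S.card ≤ g := by simpa using Finset.card_le_univ S
  have h1 : g - S.card + 1 ≤ g - T.card := by omega
  calc key S < 2 ^ g + (g - S.card) * 2 ^ g := by
        exact Nat.add_lt_add_right (keylow_lt S) _
    _ = (g - S.card + 1) * 2 ^ g := by ring
    _ ≤ (g - T.card) * 2 ^ g := Nat.mul_le_mul_right _ h1
    _ ≤ key T := Nat.le_add_left _ _




lemma reverse (hbip : (∀ a b, ¬ G.Adj (Sum.inl a) (Sum.inl b)) ∧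
      (∀ a b, ¬ G.Adj (Sum.inr a) (Sum.inr b)))
    (hmatch : ∀ i, G.Adj (Sum.inl i) (Sum.inr i))
    (h : PureShellable {F : Finset (Fin g ⊕ Fin g) | GraphIndep G F ∧ F.card = g}) :
    ∃ π : Equiv.Perm (Fin g), ∀ i j, G.Adj (Sum.inl i) (Sum.inr j) → π i ≤ π j := by
  classical
  obtain ⟨-, s, Fe, hinj, hchar, hshell⟩ := h
  set r : Fin g → Fin g → Prop := fun a b => G.Adj (Sum.inl a) (Sum.inr b) with hr
  set reach := Relation.ReflTransGen r with hreach
  have hFac : ∀ i : Fin s, GraphIndep G (Fe i) ∧ (Fe i).card = g := by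
    intro i
    have : Fe i ∈ {F : Finset (Fin g ⊕ Fin g) | GraphIndep G F ∧ F.card = g} :=
      (hchar (Fe i)).mpr ⟨i, rfl⟩
    exact this
  set Sof : Fin s → Finset (Fin g) :=
    (fun i => univ.filter (fun a => Sum.inl a ∈ Fe i)) with hSof
  have hmemS : ∀ (i : Fin s) (a : Fin g), a ∈ Sof i ↔ Sum.inl a ∈ Fe i := by
    intro i a; simp [hSof]
  have hmemS' : ∀ (i : Fin s) (a : Fin g), a ∉ Sof i ↔ Sum.inr a ∈ Fe i := by
    intro i a
    rw [hmemS i a]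
    have := exact_one hmatch (hFac i).1 (hFac i).2 a
    tauto
  have hstep : ∀ (i : Fin s), ∀ a ∈ Sof i, ∀ b, r a b → b ∈ Sof i := by
    intro i a ha b hab
    by_contra hb
    exact (hFac i).1 _ ((hmemS i a).mp ha) _ ((hmemS' i b).mp hb) hab
  have hclosed : ∀ (i : Fin s), ∀ a ∈ Sof i, ∀ b, reach a b → b ∈ Sof i := by
    intro i a ha b hab
    induction hab with
    | refl => exact ha
    | tail _ h2 ih => exact hstep i _ ih _ h2
  -- antisymmetry of reach
  have hanti : ∀ k m, reach k m → reach m k → k = m := by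
    intro k₀ m₀ hkm hmk
    by_contra hne
    -- the key invariant
    have hDiff : ∀ (j l : Fin s) (v : Fin g ⊕ Fin g), Fe j \ Fe l = {v} →
        (k₀ ∈ Sof j ↔ k₀ ∈ Sof l) := by
      intro j l v hv
      have hjl : ∀ u, u ∈ Fe j → u ∉ Fe l → u = v := by
        intro u h1 h2
        have : u ∈ Fe j \ Fe l := mem_sdiff.mpr ⟨h1, h2⟩
        rw [hv] at this
        simpa using this
      have hvm : v ∈ Fe j ∧ v ∉ Fe l := by
        have : v ∈ Fe j \ Fe l := by rw [hv]; exact mem_singleton_self v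
        exact mem_sdiff.mp this
      rcases v with k | k
      · -- v = inl k : Sof j = insert k (Sof l)
        have hkj : k ∈ Sof j := (hmemS j k).mpr hvm.1
        have hkl : k ∉ Sof l := fun hx => hvm.2 ((hmemS l k).mp hx)
        have heq : ∀ a, a ≠ k → (a ∈ Sof j ↔ a ∈ Sof l) := by
          intro a hak
          constructor
          · intro ha
            by_contra hal
            have := hjl _ ((hmemS j a).mp ha) (fun hx => hal ((hmemS l a).mpr hx))
            exact hak (by simpa using this)
          · intro hal
            by_contra haj
            have h1 : Sum.inr a ∈ Fe j := (hmemS' j a).mp haj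
            have h2 : Sum.inr a ∉ Fe l := by
              intro hx
              exact ((hmemS' l a).mpr hx) hal
            exact absurd (hjl _ h1 h2) (by simp)
        by_cases hk : k = k₀
        · subst hk
          have hm1 : m₀ ∈ Sof j := hclosed j k hkj m₀ hkm
          have hm2 : m₀ ∈ Sof l := (heq m₀ (fun hx => hne (hx.symm ▸ rfl))).mp hm1
          exact (hkl (hclosed l m₀ hm2 k hmk)).elim
        · exact heq k₀ (fun hx => hk hx.symm) |>.symm |>.symm
      · -- v = inr k : Sof l = insert k (Sof j)
        have hkj : k ∉ Sof j := (hmemS' j k).mpr hvm.1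
        have hkl : k ∈ Sof l := by
          by_contra hx
          exact hvm.2 ((hmemS' l k).mp hx)
        have heq : ∀ a, a ≠ k → (a ∈ Sof j ↔ a ∈ Sof l) := by
          intro a hak
          constructor
          · intro ha
            by_contra hal
            have := hjl _ ((hmemS j a).mp ha) (fun hx => hal ((hmemS l a).mpr hx))
            exact absurd this (by simp)
          · intro hal
            by_contra haj
            have h1 : Sum.inr a ∈ Fe j := (hmemS' j a).mp haj
            have h2 : Sum.inr a ∉ Fe l := by
              intro hx
              exact ((hmemS' l a).mpr hx) hal
            have := hjl _ h1 h2
            exact hak (by simpa using this)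
        by_cases hk : k = k₀
        · subst hk
          have hm1 : m₀ ∈ Sof l := hclosed l k hkl m₀ hkm
          have hm2 : m₀ ∈ Sof j := (heq m₀ (fun hx => hne (hx.symm ▸ rfl))).mpr hm1
          exact (hkj (hclosed j m₀ hm2 k hmk)).elim
        · exact heq k₀ (fun hx => hk hx.symm)
    -- the two extreme facets occur
    have hFe0 : toFacet (∅ : Finset (Fin g)) ∈
        {F : Finset (Fin g ⊕ Fin g) | GraphIndep G F ∧ F.card = g} := by
      refine (mem_Fac_iff hbip hmatch).mpr ⟨∅, ?_, rfl⟩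
      intro a ha
      simp at ha
    have hFe1 : toFacet (univ : Finset (Fin g)) ∈
        {F : Finset (Fin g ⊕ Fin g) | GraphIndep G F ∧ F.card = g} := by
      refine (mem_Fac_iff hbip hmatch).mpr ⟨univ, ?_, rfl⟩
      intro a _ b _
      exact mem_univ b
    obtain ⟨i₀, hi₀⟩ := (hchar _).mp hFe0
    obtain ⟨i₁, hi₁⟩ := (hchar _).mp hFe1
    have hspos : 0 < s := i₀.pos
    set zero : Fin s := ⟨0, hspos⟩ with hzero
    have main : ∀ n, ∀ j : Fin s, j.val = n → (k₀ ∈ Sof j ↔ k₀ ∈ Sof zero) := by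
      intro n
      induction n using Nat.strong_induction_on with
      | _ n ih =>
        intro j hj
        by_cases hz : j = zero
        · rw [hz]
        · have hzj : zero < j := by
            have hjv : j.val ≠ 0 := by
              intro hx
              exact hz (Fin.ext (by simp [hzero, hx]))
            rw [Fin.lt_def]
            show 0 < j.val
            omega
          obtain ⟨v, _, l, hlj, hvl⟩ := hshell zero j hzj
          rw [hDiff j l v hvl]
          exact ih l.val (by rw [← hj]; exact hlj) l rfl
    have h0 : k₀ ∉ Sof i₀ := by
      rw [hmemS, hi₀]
      simp
    have h1 : k₀ ∈ Sof i₁ := by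
      rw [hmemS, hi₁]
      simp
    rw [main i₀.val i₀ rfl] at h0
    rw [main i₁.val i₁ rfl] at h1
    exact h0 h1
  -- build the permutation via a linear extension
  haveI hpo : IsPartialOrder (Fin g) reach :=
    { refl := fun a => Relation.ReflTransGen.refl,
      trans := fun a b c => Relation.ReflTransGen.trans,
      antisymm := hanti }
  obtain ⟨le, hle, hrle⟩ := extend_partialOrder reach
  haveI := hle
  set rank : Fin g → ℕ := fun i => (univ.filter (fun k => le k i ∧ k ≠ i)).card with hrank
  have hrank_lt : ∀ i, rank i < g := by
    intro i
    have hsub : univ.filter (fun k => le k i ∧ k ≠ i) ⊆ univ.erase i := by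
      intro k hk
      rw [mem_filter] at hk
      exact mem_erase.mpr ⟨hk.2.2, mem_univ k⟩
    calc rank i ≤ (univ.erase i).card := card_le_card hsub
      _ < univ.card := card_erase_lt_of_mem (mem_univ i)
      _ = g := by simp
  have hsub : ∀ i j, le i j → (univ.filter (fun k => le k i ∧ k ≠ i)) ⊆
      (univ.filter (fun k => le k j ∧ k ≠ j)) := by
    intro i j hij k hk
    rw [mem_filter] at hk ⊢
    refine ⟨mem_univ k, IsTrans.trans _ _ _ hk.2.1 hij, ?_⟩
    intro hkj
    subst hkj
    exact hk.2.2 (Std.Antisymm.antisymm _ _ hk.2.1 hij)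
  have hmono : ∀ i j, le i j → rank i ≤ rank j := fun i j hij => card_le_card (hsub i j hij)
  have hstrict : ∀ i j, le i j → i ≠ j → rank i < rank j := by
    intro i j hij hne
    apply card_lt_card
    rw [Finset.ssubset_iff_of_subset (hsub i j hij)]
    exact ⟨i, mem_filter.mpr ⟨mem_univ i, hij, hne⟩, fun hx => (mem_filter.mp hx).2.2 rfl⟩
  set π₀ : Fin g → Fin g := fun i => ⟨rank i, hrank_lt i⟩ with hπ₀
  have hπ₀inj : Function.Injective π₀ := by
    intro i j hij
    by_contra hne
    rcases Std.Total.total (r := le) i j with hij' | hij'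
    · exact absurd (congrArg Fin.val hij) (Nat.ne_of_lt (hstrict i j hij' hne))
    · exact absurd (congrArg Fin.val hij).symm (Nat.ne_of_lt (hstrict j i hij' (Ne.symm hne)))
  refine ⟨Equiv.ofBijective π₀ (Finite.injective_iff_bijective.mp hπ₀inj), ?_⟩
  intro i j hadj
  have hreach' : reach i j := Relation.ReflTransGen.single hadj
  have := hmono i j (hrle _ _ hreach')
  simpa [Equiv.ofBijective, hπ₀, Fin.le_def] using this


lemma forward (hbip : (∀ a b, ¬ G.Adj (Sum.inl a) (Sum.inl b)) ∧
      (∀ a b, ¬ G.Adj (Sum.inr a) (Sum.inr b)))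
    (hmatch : ∀ i, G.Adj (Sum.inl i) (Sum.inr i))
    (π : Equiv.Perm (Fin g)) (hπ : ∀ i j, G.Adj (Sum.inl i) (Sum.inr j) → π i ≤ π j) :
    PureShellable {F : Finset (Fin g ⊕ Fin g) | GraphIndep G F ∧ F.card = g} := by
  classical
  constructor
  · intro F hF F' hF'
    rw [hF.2, hF'.2]
  · set L : Finset (Finset (Fin g)) := univ.filter (fun S => Closed G S) with hL
    set N : Finset ℕ := L.image key with hN
    set σ : Fin N.card ≃o {x // x ∈ N} := N.orderIsoOfFin rfl with hσ
    have hdec : ∀ i : Fin N.card, ∃ S, Closed G S ∧ key S = ((σ i : ℕ)) := by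
      intro i
      have hm : (σ i : ℕ) ∈ N := (σ i).2
      obtain ⟨S, hS, hkey⟩ := mem_image.mp hm
      exact ⟨S, (mem_filter.mp hS).2, hkey⟩
    choose dec hdecC hdecK using hdec
    have hlt : ∀ i j : Fin N.card, i < j ↔ key (dec i) < key (dec j) := by
      intro i j
      rw [hdecK i, hdecK j, ← σ.lt_iff_lt, ← Subtype.coe_lt_coe]
    have hidx : ∀ S, Closed G S → ∃ i, dec i = S := by
      intro S hS
      have hSN : key S ∈ N := by
        rw [hN]
        exact mem_image_of_mem _ (mem_filter.mpr ⟨mem_univ S, hS⟩)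
      obtain ⟨i, hi⟩ := σ.surjective ⟨key S, hSN⟩
      refine ⟨i, key_injective ?_⟩
      rw [hdecK i, hi]
    refine ⟨N.card, fun i => toFacet (dec i), ?_, ?_, ?_⟩
    · intro i j hFe
      have hdeq : dec i = dec j := toFacet_inj hFe
      by_contra hne
      rcases lt_or_gt_of_ne hne with hij | hij
      · exact absurd ((hlt i j).mp hij) (by rw [hdeq]; exact lt_irrefl _)
      · exact absurd ((hlt j i).mp hij) (by rw [hdeq]; exact lt_irrefl _)
    · intro F
      rw [Set.mem_setOf_eq, mem_Fac_iff hbip hmatch]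
      constructor
      · rintro ⟨S, hS, rfl⟩
        obtain ⟨i, hi⟩ := hidx S hS
        exact ⟨i, congrArg toFacet hi⟩
      · rintro ⟨i, rfl⟩
        exact ⟨dec i, hdecC i, rfl⟩
    · intro i j hij
      have hkey : key (dec i) < key (dec j) := (hlt i j).mp hij
      -- dec i \ dec j is nonempty
      have hne : (dec i \ dec j).Nonempty := by
        rw [Finset.sdiff_nonempty]
        intro hsub
        rcases eq_or_ne (dec i) (dec j) with heq | hne'
        · rw [heq] at hkey; exact lt_irrefl _ hkey
        · have : (dec i).card < (dec j).card := card_lt_card (ssubset_of_subset_of_ne hsub hne')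
          exact absurd (key_lt_of_card_lt this) (by omega)
      obtain ⟨j', hj'mem, hj'max⟩ := exists_max_image (dec i \ dec j) (fun a => π a) hne
      rw [mem_sdiff] at hj'mem
      set S' : Finset (Fin g) := insert j' (dec j) with hS'
      have hS'closed : Closed G S' := by
        intro a ha b hadj
        rw [hS', mem_insert] at ha ⊢
        rcases ha with rfl | ha
        · -- a = j'
          have hbT : b ∈ dec i := hdecC i a hj'mem.1 b hadj
          by_cases hbS : b ∈ dec j
          · exact Or.inr hbS
          · have hble : π b ≤ π a := hj'max b (mem_sdiff.mpr ⟨hbT, hbS⟩)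
            have hab : π a ≤ π b := hπ a b hadj
            exact Or.inl (π.injective (le_antisymm hab hble)).symm
        · exact Or.inr (hdecC j a ha b hadj)
      have hcard : (dec j).card < S'.card := by
        rw [hS', card_insert_of_notMem hj'mem.2]
        omega
      obtain ⟨l, hl⟩ := hidx S' hS'closed
      have hlj : l < j := by
        rw [hlt l j, hl]
        exact key_lt_of_card_lt hcard
      refine ⟨Sum.inr j', ?_, l, hlj, ?_⟩
      · rw [mem_sdiff, mem_inr, mem_inr]
        exact ⟨hj'mem.2, fun hx => hx hj'mem.1⟩
      · show toFacet (dec j) \ toFacet (dec l) = {Sum.inr j'}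
        rw [hl]
        ext u
        rcases u with a | a
        · simp only [mem_sdiff, mem_inl, mem_singleton, hS', mem_insert]
          constructor
          · rintro ⟨h1, h2⟩
            exact absurd (Or.inr h1) h2
          · intro hx
            exact absurd hx (by simp)
        · simp only [mem_sdiff, mem_inr, mem_singleton, hS', mem_insert, Sum.inr.injEq]
          constructor
          · rintro ⟨h1, h2⟩
            push_neg at h2
            rcases h2 with h2 | h2
            · exact h2
            · exact absurd h2 h1
          · rintro rfl
            exact ⟨hj'mem.2, by simp⟩

end PSS18

/-- Let `G` be a bipartite graph without isolated vertices on the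
bipartition `{x_1,…,x_g} ∪ {y_1,…,y_g}` (here `x i = Sum.inl i`, `y i = Sum.inr i`)
with all edges `{x i, y i}` present. The complex `Γ = Δ_G^{[g]}`, whose facets are the
independent sets of cardinality `g`, is pure shellable iff the indices can be reordered
by a permutation `π` so that every edge `{x i, y j}` satisfies `π i ≤ π j`. -/
theorem pure_skeleton_shellable_iff_ordering
    {g : ℕ} (G : SimpleGraph (Fin g ⊕ Fin g))
    (hbip : (∀ a b, ¬ G.Adj (Sum.inl a) (Sum.inl b)) ∧
            (∀ a b, ¬ G.Adj (Sum.inr a) (Sum.inr b)))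
    (hnoiso : ∀ v, ∃ w, G.Adj v w)
    (hmatch : ∀ i, G.Adj (Sum.inl i) (Sum.inr i)) :
    PureShellable {F : Finset (Fin g ⊕ Fin g) | GraphIndep G F ∧ F.card = g} ↔
      ∃ π : Equiv.Perm (Fin g), ∀ i j, G.Adj (Sum.inl i) (Sum.inr j) → π i ≤ π j := by
  constructor
  · exact PSS18.reverse hbip hmatch
  · rintro ⟨π, hπ⟩
    exact PSS18.forward hbip hmatch π hπ
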